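/- Let M be a 4×4 real symmetric positive semidefinite matrix with all diagonal entries equal to 1, and let V ∈ ℝ⁴ with entries c₁, c₂, c₃, c₄ be such that M − V Vᵀ is positive semidefinite. Writing σᵢ = √(1 − cᵢ²), the following three inequalities hold: |c₁c₂ − c₃c₄ − M₁₂ + M₃₄| ≤ σ₁σ₂ + σ₃σ₄, |c₁c₃ − c₂c₄ − M₁₃ + M₂₄| ≤ σ₁σ₃ + σ₂σ₄, and |c₂c₃ − c₁c₄ − M₂₃ + M₁₄| ≤ σ₂σ₃ + σ₁σ₄. -/

import Mathlib

lemma psd_diag_nonneg (C : Matrix (Fin 4) (Fin 4) ℝ) (hC : C.PosSemidef) (i : Fin 4) :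
    0 ≤ C i i := by
  have h := hC.dotProduct_mulVec_nonneg (Pi.single i 1)
  simpa [dotProduct, Matrix.mulVec, Pi.single_apply, Fin.sum_univ_four] using h

set_option maxHeartbeats 1000000 in
set_option synthInstance.maxHeartbeats 400000 in
lemma psd_entry_le (C : Matrix (Fin 4) (Fin 4) ℝ) (hC : C.PosSemidef) (i j : Fin 4) : |C i j| ≤ Real.sqrt (C i i) * Real.sqrt (C j j) := by
  have hsym : C j i = C i j := by
    have h1 := congrFun (congrFun hC.1 i) j
    simpa [Matrix.conjTranspose_apply] using h1
  have key : ∀ t : ℝ, 0 ≤ C i i * (t * t) + (2 * C i j) * t + C j j := by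
    intro t
    set x : Fin 4 → ℝ := t • (Pi.single i 1 : Fin 4 → ℝ) + (Pi.single j 1 : Fin 4 → ℝ) with hx
    have h := hC.dotProduct_mulVec_nonneg x
    rw [hx] at h
    simp only [star_trivial, Matrix.mulVec_add, Matrix.mulVec_smul, Matrix.mulVec_single,
      dotProduct_add, dotProduct_smul, add_dotProduct,
      smul_dotProduct, dotProduct_single, single_dotProduct,
      mul_one, smul_eq_mul, Matrix.col_apply, MulOpposite.op_one, one_smul, one_mul] at h
    rw [hsym] at h
    linarith
  have hdisc := discrim_le_zero key
  rw [discrim] at hdisc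
  have h2 : C i j ^ 2 ≤ C i i * C j j := by nlinarith
  calc |C i j| = Real.sqrt (C i j ^ 2) := (Real.sqrt_sq_eq_abs _).symm
  _ ≤ Real.sqrt (C i i * C j j) := Real.sqrt_le_sqrt h2
  _ = Real.sqrt (C i i) * Real.sqrt (C j j) := Real.sqrt_mul (psd_diag_nonneg C hC i) _



/-- For a 4×4 real symmetric PSD matrix `M` with unit diagonal and a
correlator vector `V` (entries `c i = V i`) such that `M - V Vᵀ` is PSD, the three
quantum-like bounds on two-point correlators hold, where `σ i = √(1 - (c i)²)`. -/
theorem covariance_certificate_bounds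
    (M : Matrix (Fin 4) (Fin 4) ℝ) (hM : M.PosSemidef)
    (hdiag : ∀ i, M i i = 1)
    (V : Fin 4 → ℝ)
    (hC : (M - Matrix.vecMulVec V V).PosSemidef) :
    |V 0 * V 1 - V 2 * V 3 - M 0 1 + M 2 3| ≤
      Real.sqrt (1 - (V 0) ^ 2) * Real.sqrt (1 - (V 1) ^ 2) +
      Real.sqrt (1 - (V 2) ^ 2) * Real.sqrt (1 - (V 3) ^ 2) ∧
    |V 0 * V 2 - V 1 * V 3 - M 0 2 + M 1 3| ≤
      Real.sqrt (1 - (V 0) ^ 2) * Real.sqrt (1 - (V 2) ^ 2) +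
      Real.sqrt (1 - (V 1) ^ 2) * Real.sqrt (1 - (V 3) ^ 2) ∧
    |V 1 * V 2 - V 0 * V 3 - M 1 2 + M 0 3| ≤
      Real.sqrt (1 - (V 1) ^ 2) * Real.sqrt (1 - (V 2) ^ 2) +
      Real.sqrt (1 - (V 0) ^ 2) * Real.sqrt (1 - (V 3) ^ 2) := by
  have hCij : ∀ i j, (M - Matrix.vecMulVec V V) i j = M i j - V i * V j := by
    intro i j; simp [Matrix.sub_apply, Matrix.vecMulVec_apply]
  have hdi : ∀ i, (M - Matrix.vecMulVec V V) i i = 1 - V i ^ 2 := by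
    intro i; rw [hCij, hdiag]; ring
  have key : ∀ i j, |M i j - V i * V j| ≤
      Real.sqrt (1 - V i ^ 2) * Real.sqrt (1 - V j ^ 2) := by
    intro i j
    have h := psd_entry_le _ hC i j
    rwa [hCij, hdi, hdi] at h
  have habs : ∀ a b c d : ℝ, |b - d - a + c| ≤ |a - b| + |c - d| := by
    intro a b c d
    calc |b - d - a + c| = |(c - d) - (a - b)| := by ring_nf
    _ ≤ |c - d| + |a - b| := abs_sub _ _
    _ = |a - b| + |c - d| := add_comm _ _
  refine ⟨?_, ?_, ?_⟩
  · exact le_trans (habs (M 0 1) (V 0 * V 1) (M 2 3) (V 2 * V 3))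
      (add_le_add (key 0 1) (key 2 3))
  · exact le_trans (habs (M 0 2) (V 0 * V 2) (M 1 3) (V 1 * V 3))
      (add_le_add (key 0 2) (key 1 3))
  · exact le_trans (habs (M 1 2) (V 1 * V 2) (M 0 3) (V 0 * V 3))
      (add_le_add (key 1 2) (key 0 3))
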